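/- For every m ∈ [0,1], β > 0 and every pair (v, φ) with v : ℝ → [0,1] absolutely continuous satisfying inf v = m, and φ : ℝ → [0,π] absolutely continuous with lim_{t→-∞} φ(t) = 0 and lim_{t→+∞} φ(t) = π, one has G_β(v,φ) ≥ √2 (2/3 - m + m³(1/3 + √β/(2√2))). -/

import Mathlib

set_option maxHeartbeats 1000000
open MeasureTheory Real Set Filter

/-- The one-dimensional energy `G_β`. -/
noncomputable def Gbeta (β : ℝ) (v φ : ℝ → ℝ) : ℝ :=
  (1/2) * ∫ t : ℝ, (deriv v t)^2 + (1 - (v t)^2)^2 / 2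
    + (v t)^2 * (deriv φ t)^2 / 4 + (β/4) * (v t)^4 * (Real.sin (φ t))^2

private lemma icc_bound {f : ℝ → ℝ} (hf : Integrable f) (hf0 : ∀ t, 0 ≤ f t)
    {c T T' : ℝ} (hT : T ≤ T') (h : ∀ t ∈ Set.Icc T T', c ≤ f t) :
    c * (T' - T) ≤ ∫ t, f t := by
  have h1 : ∫ t in Set.Icc T T', f t ≤ ∫ t, f t :=
    setIntegral_le_integral hf (Filter.Eventually.of_forall hf0)
  have h2 : ∫ _t in Set.Icc T T', c ≤ ∫ t in Set.Icc T T', f t :=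
    setIntegral_mono_on (integrableOn_const measure_Icc_lt_top.ne)
      hf.integrableOn measurableSet_Icc h
  rw [setIntegral_const, measureReal_def, Real.volume_Icc, ENNReal.toReal_ofReal (by linarith), smul_eq_mul,
    mul_comm] at h2
  linarith

private lemma exists_small_left {f : ℝ → ℝ} (hf : Integrable f) (hf0 : ∀ t, 0 ≤ f t)
    {c : ℝ} (hc : 0 < c) (T : ℝ) : ∃ t, t < T ∧ f t < c := by
  by_contra hcon
  push_neg at hcon
  obtain ⟨n, hn⟩ := exists_nat_gt ((∫ t, f t) / c)
  have hb := icc_bound hf hf0 (show T - 1 - n ≤ T - 1 by linarith [Nat.cast_nonneg (α := ℝ) n])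
    (fun t ht => hcon t (by linarith [ht.2]))
  have he : (T - 1) - (T - 1 - (n:ℝ)) = n := by ring
  rw [he, mul_comm] at hb
  rw [div_lt_iff₀ hc] at hn
  linarith

private lemma exists_small_right {f : ℝ → ℝ} (hf : Integrable f) (hf0 : ∀ t, 0 ≤ f t)
    {c : ℝ} (hc : 0 < c) (T : ℝ) : ∃ t, T < t ∧ f t < c := by
  by_contra hcon
  push_neg at hcon
  obtain ⟨n, hn⟩ := exists_nat_gt ((∫ t, f t) / c)
  have hb := icc_bound hf hf0 (show T + 1 ≤ T + 1 + n by linarith [Nat.cast_nonneg (α := ℝ) n])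
    (fun t ht => hcon t (by linarith [ht.1]))
  have he : (T + 1 + (n:ℝ)) - (T + 1) = n := by ring
  rw [he, mul_comm] at hb
  rw [div_lt_iff₀ hc] at hn
  linarith

private lemma ptwise1 (a b : ℝ) : Real.sqrt 2 * |a * b| ≤ a^2 + b^2/2 := by
  rw [abs_mul]
  nlinarith [sq_nonneg (Real.sqrt 2 * |a| - |b|), Real.sq_sqrt (by norm_num : (0:ℝ) ≤ 2),
    sq_abs a, sq_abs b, abs_nonneg a, abs_nonneg b]

private lemma ptwise2 (r m x s p : ℝ) (hr : 0 ≤ r) (hm : 0 ≤ m) (hx : m ≤ x) (hs : 0 ≤ s) :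
    r * m^3 / 2 * |s * p| ≤ x^2 * p^2 / 4 + (r^2/4) * x^4 * s^2 := by
  rw [abs_mul, abs_of_nonneg hs]
  have h1 := sq_nonneg (x * |p| - r * x^2 * s)
  have h3 : m^3 ≤ x^3 := pow_le_pow_left₀ hm hx 3
  have h4 : 0 ≤ r * (s * |p|) := by positivity
  have key : 0 ≤ r * (s * |p|) * (x^3 - m^3) := mul_nonneg h4 (by linarith)
  nlinarith [sq_abs p, key, h1]

theorem lower_bound_Gbeta (β m : ℝ) (hβ : 0 < β) (hm : m ∈ Set.Icc (0:ℝ) 1)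
    (v φ : ℝ → ℝ)
    (hv : Differentiable ℝ v) (hv01 : ∀ t, v t ∈ Set.Icc (0:ℝ) 1)
    (hinf : IsGLB (Set.range v) m)
    (hφ : Differentiable ℝ φ) (hφ0π : ∀ t, φ t ∈ Set.Icc (0:ℝ) Real.pi)
    (hbot : Tendsto φ atBot (nhds 0)) (htop : Tendsto φ atTop (nhds Real.pi))
    (hint : Integrable (fun t => (deriv v t)^2 + (1 - (v t)^2)^2 / 2
      + (v t)^2 * (deriv φ t)^2 / 4 + (β/4) * (v t)^4 * (Real.sin (φ t))^2)) :
    Gbeta β v φ ≥ Real.sqrt 2 * (2/3 - m + m^3 * (1/3 + Real.sqrt β / (2 * Real.sqrt 2))) := by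
  obtain ⟨hm0, hm1⟩ := hm
  have hvm : ∀ t, m ≤ v t := fun t => hinf.1 ⟨t, rfl⟩
  have hs2 : (0:ℝ) < Real.sqrt 2 := Real.sqrt_pos.mpr (by norm_num)
  set r := Real.sqrt β with hr_def
  have hr0 : 0 ≤ r := Real.sqrt_nonneg β
  have hr2 : r^2 = β := Real.sq_sqrt hβ.le
  set k := r * m^3 / 2 with hk_def
  have hk0 : 0 ≤ k := by rw [hk_def]; positivity
  set f : ℝ → ℝ := fun t => (deriv v t)^2 + (1 - (v t)^2)^2 / 2
      + (v t)^2 * (deriv φ t)^2 / 4 + (β/4) * (v t)^4 * (Real.sin (φ t))^2 with hf_def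
  have hG : Gbeta β v φ = (1/2) * ∫ t, f t := by rw [hf_def]; rfl
  have hf0 : ∀ t, 0 ≤ f t := fun t => by simp only [hf_def]; positivity
  set Fd : ℝ → ℝ := fun t => deriv v t * (1 - (v t)^2) with hFd_def
  set Hd : ℝ → ℝ := fun t => Real.sin (φ t) * deriv φ t with hHd_def
  have hFder : ∀ x, HasDerivAt (fun t => v t - (v t)^3/3) (Fd x) x := by
    intro x
    have h1 := (hv x).hasDerivAt
    have h2 := h1.sub ((h1.pow 3).div_const 3)
    exact h2.congr_deriv (by show _ = deriv v x * (1 - (v x)^2); ring)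
  have hHder : ∀ x, HasDerivAt (fun t => -Real.cos (φ t)) (Hd x) x := by
    intro x
    have h2 := ((hφ x).hasDerivAt).cos.neg
    exact h2.congr_deriv (by show _ = Real.sin (φ x) * deriv φ x; ring)
  have hb1 : ∀ t, Real.sqrt 2 * |Fd t| ≤ (deriv v t)^2 + (1 - (v t)^2)^2 / 2 := by
    intro t; simp only [hFd_def]; exact ptwise1 _ _
  have hb2 : ∀ t, k * |Hd t| ≤ (v t)^2 * (deriv φ t)^2 / 4 + (β/4) * (v t)^4 * (Real.sin (φ t))^2 := by
    intro t
    have hsin : 0 ≤ Real.sin (φ t) :=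
      Real.sin_nonneg_of_nonneg_of_le_pi (hφ0π t).1 (hφ0π t).2
    have h := ptwise2 r m (v t) (Real.sin (φ t)) (deriv φ t) hr0 hm0 (hvm t) hsin
    rw [hr2] at h
    simpa [hHd_def, hk_def] using h
  have hsum : ∀ t, Real.sqrt 2 * |Fd t| + k * |Hd t| ≤ f t := fun t => by
    have h1 := hb1 t; have h2 := hb2 t; simp only [hf_def]; linarith
  have hb1f : ∀ t, Real.sqrt 2 * |Fd t| ≤ f t := fun t => by
    have := hsum t; nlinarith [abs_nonneg (Hd t), hk0, mul_nonneg hk0 (abs_nonneg (Hd t))]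
  have hb2f : ∀ t, k * |Hd t| ≤ f t := fun t => by
    have := hsum t; nlinarith [abs_nonneg (Fd t), mul_nonneg hs2.le (abs_nonneg (Fd t))]
  -- measurability
  have hFdmeas : Measurable Fd := by
    simp only [hFd_def]
    exact (measurable_deriv v).mul
      (measurable_const.sub ((hv.continuous.measurable).pow_const 2))
  have hHdmeas : Measurable Hd := by
    simp only [hHd_def]
    exact ((Real.continuous_sin.comp hφ.continuous).measurable).mul (measurable_deriv φ)
  -- integrability
  have hFdint : Integrable Fd := by
    refine Integrable.mono' (hint.const_mul (Real.sqrt 2)⁻¹) hFdmeas.aestronglyMeasurable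
      (Filter.Eventually.of_forall fun t => ?_)
    rw [Real.norm_eq_abs, inv_mul_eq_div, le_div_iff₀ hs2, mul_comm]
    exact hb1f t
  have hFdabs : Integrable (fun t => |Fd t|) := hFdint.abs
  have hkHdint : Integrable (fun t => k * |Hd t|) := by
    refine Integrable.mono' hint ((hHdmeas.abs.const_mul k).aestronglyMeasurable)
      (Filter.Eventually.of_forall fun t => ?_)
    rw [Real.norm_eq_abs, abs_of_nonneg (mul_nonneg hk0 (abs_nonneg _))]
    exact hb2f t
  -- FTC helpers
  have ftcF : ∀ a b : ℝ, (∫ t in a..b, Fd t) = (v b - (v b)^3/3) - (v a - (v a)^3/3) :=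
    fun a b => intervalIntegral.integral_eq_sub_of_hasDerivAt (fun x _ => hFder x)
      hFdint.intervalIntegrable
  have habsF : ∀ a b : ℝ, a ≤ b →
      |(v b - (v b)^3/3) - (v a - (v a)^3/3)| ≤ ∫ t in a..b, |Fd t| := by
    intro a b hab
    rw [← ftcF]
    exact intervalIntegral.abs_integral_le_integral_abs hab
  -- rewrite the target
  rw [ge_iff_le, show Real.sqrt 2 * (2/3 - m + m^3 * (1/3 + r / (2 * Real.sqrt 2)))
      = Real.sqrt 2 * (2/3 - m + m^3/3) + k by
    rw [hk_def]; field_simp; ring]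
  refine le_of_forall_pos_le_add fun ε hε => ?_
  have hCpos : (0:ℝ) < 2 * Real.sqrt 2 + k + 1 := by positivity
  set δ := min (ε / (2 * Real.sqrt 2 + k + 1)) (1/2) with hδ_def
  have hδ0 : 0 < δ := lt_min (div_pos hε hCpos) one_half_pos
  have hδh : δ ≤ 1/2 := min_le_right _ _
  have hδC : δ * (2 * Real.sqrt 2 + k + 1) ≤ ε :=
    (le_div_iff₀ hCpos).mp (min_le_left _ _)
  -- the near-infimum point
  obtain ⟨t0, ht0⟩ : ∃ t0, v t0 < m + δ := by
    by_contra hc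
    push_neg at hc
    have : m + δ ≤ m := hinf.2 (fun y hy => by obtain ⟨t, rfl⟩ := hy; exact hc t)
    linarith
  -- points where v is close to 1 on both sides
  have near1 : ∀ t, f t < δ^2/2 → 1 - δ ≤ v t := by
    intro t hft
    by_contra hcs
    push_neg at hcs
    have hv0 := (hv01 t).1
    have h1 : δ ≤ 1 - (v t)^2 := by nlinarith [mul_nonneg hv0 (by linarith : (0:ℝ) ≤ 1 - v t)]
    have h2 : δ^2/2 ≤ f t := by
      simp only [hf_def]
      nlinarith [sq_nonneg (deriv v t), mul_nonneg (sq_nonneg (v t)) (sq_nonneg (deriv φ t)),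
        (show (0:ℝ) ≤ (β/4) * (v t)^4 * (Real.sin (φ t))^2 by positivity), hδ0.le]
    linarith
  obtain ⟨s, hst0, hfs⟩ := exists_small_left hint hf0 (show (0:ℝ) < δ^2/2 by positivity) t0
  obtain ⟨u, ht0u, hfu⟩ := exists_small_right hint hf0 (show (0:ℝ) < δ^2/2 by positivity) t0
  have hvs : 1 - δ ≤ v s := near1 s hfs
  have hvu : 1 - δ ≤ v u := near1 u hfu
  -- W-function estimates
  have hWt0 : v t0 - (v t0)^3/3 ≤ m - m^3/3 + δ := by
    have h3 := pow_le_pow_left₀ hm0 (hvm t0) 3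
    linarith
  have hWs : 2/3 - δ ≤ v s - (v s)^3/3 := by
    have hx3 : (v s)^3 ≤ 1 := pow_le_one₀ (hv01 s).1 (hv01 s).2
    linarith
  have hWu : 2/3 - δ ≤ v u - (v u)^3/3 := by
    have hx3 : (v u)^3 ≤ 1 := pow_le_one₀ (hv01 u).1 (hv01 u).2
    linarith
  -- F part
  have hpiece1 : (2/3 - m + m^3/3) - 2*δ ≤ ∫ t in s..t0, |Fd t| := by
    have h := habsF s t0 hst0.le
    have h' : (v s - (v s)^3/3) - (v t0 - (v t0)^3/3)
        ≤ |(v t0 - (v t0)^3/3) - (v s - (v s)^3/3)| := by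
      rw [abs_sub_comm]; exact le_abs_self _
    linarith
  have hpiece2 : (2/3 - m + m^3/3) - 2*δ ≤ ∫ t in t0..u, |Fd t| := by
    have h := habsF t0 u ht0u.le
    have h' : (v u - (v u)^3/3) - (v t0 - (v t0)^3/3)
        ≤ |(v u - (v u)^3/3) - (v t0 - (v t0)^3/3)| := le_abs_self _
    linarith
  have hFtot : 2*((2/3 - m + m^3/3) - 2*δ) ≤ ∫ t, |Fd t| := by
    have hsplit : (∫ t in s..t0, |Fd t|) + ∫ t in t0..u, |Fd t| = ∫ t in s..u, |Fd t| :=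
      intervalIntegral.integral_add_adjacent_intervals hFdabs.intervalIntegrable
        hFdabs.intervalIntegrable
    have hsu : s ≤ u := hst0.le.trans ht0u.le
    have h1 : (∫ t in s..u, |Fd t|) = ∫ t in Set.Ioc s u, |Fd t| :=
      intervalIntegral.integral_of_le hsu
    have h2 : (∫ t in Set.Ioc s u, |Fd t|) ≤ ∫ t, |Fd t| :=
      setIntegral_le_integral hFdabs (Filter.Eventually.of_forall fun t => abs_nonneg _)
    linarith
  -- H part
  have hHtot : k*(2 - 2*δ) ≤ ∫ t, k * |Hd t| := by
    rcases eq_or_lt_of_le hm0 with hm0' | hmpos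
    · have hk : k = 0 := by rw [hk_def, ← hm0']; ring
      rw [hk]
      simp
    · have hrpos : 0 < r := Real.sqrt_pos.mpr hβ
      have hkpos : 0 < k := by rw [hk_def]; positivity
      have hHdint : Integrable Hd := by
        refine Integrable.mono' (hint.const_mul k⁻¹) hHdmeas.aestronglyMeasurable
          (Filter.Eventually.of_forall fun t => ?_)
        rw [Real.norm_eq_abs, inv_mul_eq_div, le_div_iff₀ hkpos, mul_comm]
        exact hb2f t
      have hHdabs : Integrable (fun t => |Hd t|) := hHdint.abs
      have hcos_bot : Tendsto (fun t => Real.cos (φ t)) atBot (nhds 1) := by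
        have := (Real.continuous_cos.tendsto 0).comp hbot
        simpa [Function.comp_def, Real.cos_zero] using this
      have hcos_top : Tendsto (fun t => Real.cos (φ t)) atTop (nhds (-1)) := by
        have := (Real.continuous_cos.tendsto Real.pi).comp htop
        simpa [Function.comp_def, Real.cos_pi] using this
      obtain ⟨a, ha⟩ :=
        (hcos_bot.eventually (eventually_gt_nhds (show 1 - δ < 1 by linarith))).exists
      obtain ⟨b, hbcos, hba⟩ :=
        ((hcos_top.eventually (eventually_lt_nhds (show (-1:ℝ) < -(1-δ) by linarith))).and
          (eventually_gt_atTop a)).exists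
      have hab : a ≤ b := hba.le
      have ftcH : (∫ t in a..b, Hd t) = (-Real.cos (φ b)) - (-Real.cos (φ a)) :=
        intervalIntegral.integral_eq_sub_of_hasDerivAt (fun x _ => hHder x)
          hHdint.intervalIntegrable
      have h1 : 2 - 2*δ ≤ ∫ t in a..b, Hd t := by rw [ftcH]; linarith
      have h2 : (∫ t in a..b, Hd t) ≤ ∫ t in a..b, |Hd t| :=
        intervalIntegral.integral_mono hab hHdint.intervalIntegrable
          hHdabs.intervalIntegrable (fun t => le_abs_self _)
      have h3 : (∫ t in a..b, |Hd t|) = ∫ t in Set.Ioc a b, |Hd t| :=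
        intervalIntegral.integral_of_le hab
      have h4 : (∫ t in Set.Ioc a b, |Hd t|) ≤ ∫ t, |Hd t| :=
        setIntegral_le_integral hHdabs (Filter.Eventually.of_forall fun t => abs_nonneg _)
      rw [integral_const_mul]
      have : 2 - 2*δ ≤ ∫ t, |Hd t| := by linarith
      exact mul_le_mul_of_nonneg_left this hk0
  -- combine
  have hbig : ∫ t, (Real.sqrt 2 * |Fd t| + k * |Hd t|) ≤ ∫ t, f t :=
    integral_mono ((hFdabs.const_mul _).add hkHdint) hint (fun t => hsum t)
  rw [integral_add (hFdabs.const_mul _) hkHdint, integral_const_mul] at hbig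
  have hA : Real.sqrt 2 * (2*((2/3 - m + m^3/3) - 2*δ)) ≤ Real.sqrt 2 * ∫ t, |Fd t| :=
    mul_le_mul_of_nonneg_left hFtot hs2.le
  rw [hG]
  nlinarith [hA, hHtot, hbig, hδC, hδ0.le, hk0, hs2, hδh,
    mul_nonneg hδ0.le hs2.le, mul_nonneg hδ0.le hk0]
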